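/- Let x ∈ ℝⁿ have all entries strictly positive, let U be a real n×q matrix of full column rank, and let A = diag(x)·U·(Uᵀ·diag(x)·U)⁻¹·Uᵀ. Let V̄ be any real n×n matrix with V̄ᵀ·U = 0. Then the n×n matrix (Iₙ − V̄)ᵀ·diag(1/x)·(Iₙ − V̄) − diag(1/x)·A is positive semidefinite. -/

import Mathlib

open Matrix

theorem stmt7 {n q : ℕ} (hn : 0 < n) (hq : 0 < q)
    (x : Fin n → ℝ) (hx : ∀ i, 0 < x i)
    (U : Matrix (Fin n) (Fin q) ℝ)
    (hU : LinearIndependent ℝ (fun j : Fin q => fun i : Fin n => U i j))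
    (Vbar : Matrix (Fin n) (Fin n) ℝ) (hVbar : Vbarᵀ * U = 0) :
    let A := Matrix.diagonal x * U * (Uᵀ * Matrix.diagonal x * U)⁻¹ * Uᵀ
    ((1 - Vbar)ᵀ * Matrix.diagonal (fun i => (x i)⁻¹) * (1 - Vbar)
      - Matrix.diagonal (fun i => (x i)⁻¹) * A).PosSemidef := by
  intro A
  set D := Matrix.diagonal x with hD
  set E := Matrix.diagonal (fun i => (x i)⁻¹) with hEdef
  have hED : E * D = 1 := by
    rw [hEdef, hD, diagonal_mul_diagonal]
    rw [show (fun i => (x i)⁻¹ * x i) = fun _ => (1 : ℝ) from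
      funext fun i => inv_mul_cancel₀ (hx i).ne', diagonal_one]
  have hDE : D * E = 1 := by
    rw [hEdef, hD, diagonal_mul_diagonal]
    rw [show (fun i => x i * (x i)⁻¹) = fun _ => (1 : ℝ) from
      funext fun i => mul_inv_cancel₀ (hx i).ne', diagonal_one]
  have hUH : Uᴴ = Uᵀ := by ext i j; simp [conjTranspose_apply]
  have hDpd : D.PosDef := Matrix.PosDef.diagonal hx
  have hUinj : Function.Injective U.mulVec := Matrix.mulVec_injective_iff.mpr hU
  have hMpd : (Uᵀ * D * U).PosDef := by
    rw [← hUH]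
    refine Matrix.PosDef.of_dotProduct_mulVec_pos (isHermitian_conjTranspose_mul_mul U hDpd.1) (fun v hv => ?_)
    have hUv : U *ᵥ v ≠ 0 := fun h => hv (hUinj (by simpa using h))
    simpa only [star_mulVec, dotProduct_mulVec, vecMul_vecMul] using (posDef_iff_dotProduct_mulVec.mp hDpd).2 hUv
  set M := Uᵀ * D * U with hM
  set S := M⁻¹ with hS
  haveI := hMpd.isUnit.invertible
  have hSM : S * M = 1 := inv_mul_of_invertible M
  have hMS : M * S = 1 := mul_inv_of_invertible M
  have hMt : Mᵀ = M := by
    rw [hM]; simp [hD, transpose_mul, Matrix.diagonal_transpose, Matrix.mul_assoc]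
  have hSt : Sᵀ = S := by rw [hS, Matrix.transpose_nonsing_inv, hMt]
  have hUtV : Uᵀ * Vbar = 0 := by
    have := congrArg Matrix.transpose hVbar
    simpa [Matrix.transpose_mul] using this
  set P := U * S * Uᵀ with hP
  have hEA : E * A = P := by
    rw [hP]
    calc E * A = (E * D) * (U * S * Uᵀ) := by
          simp only [A, ← hM, Matrix.mul_assoc]
          simp only [hS, hM, hD, Matrix.mul_assoc]
      _ = U * S * Uᵀ := by rw [hED, Matrix.one_mul]
  have hAtE : Aᵀ * E = P := by
    have hAt : Aᵀ = U * S * (Uᵀ * D) := by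
      simp only [A, ← hM, Matrix.transpose_mul, Matrix.transpose_transpose,
        Matrix.diagonal_transpose, hSt, Matrix.mul_assoc]
      rw [← hSt]; simp only [hS, hM, hD, Matrix.mul_assoc]
    rw [hAt, hP]
    calc U * S * (Uᵀ * D) * E = U * S * Uᵀ * (D * E) := by
          simp only [Matrix.mul_assoc]
      _ = U * S * Uᵀ := by rw [hDE, Matrix.mul_one]
  have hUtA : Uᵀ * A = Uᵀ := by
    have h : Uᵀ * A = (Uᵀ * D * U) * S * Uᵀ := by
      simp only [A, hD, hS, hM, Matrix.mul_assoc]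
    rw [h, ← hM, hMS, Matrix.one_mul]
  have hPA : P * A = P := by
    rw [hP]
    calc U * S * Uᵀ * A = U * S * (Uᵀ * A) := by simp only [Matrix.mul_assoc]
      _ = P := by rw [hUtA, hP]
  have hPV : P * Vbar = 0 := by
    rw [hP]
    calc U * S * Uᵀ * Vbar = U * S * (Uᵀ * Vbar) := by simp only [Matrix.mul_assoc]
      _ = 0 := by rw [hUtV, Matrix.mul_zero]
  have hVtP : Vbarᵀ * P = 0 := by
    rw [hP]
    calc Vbarᵀ * (U * S * Uᵀ) = Vbarᵀ * U * (S * Uᵀ) := by simp only [Matrix.mul_assoc]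
      _ = 0 := by rw [hVbar, Matrix.zero_mul]
  have key : (1 - Vbar)ᵀ * E * (1 - Vbar) - E * A
      = (1 - Vbar - A)ᵀ * E * (1 - Vbar - A) := by
    have expand : (1 - Vbar - A)ᵀ * E * (1 - Vbar - A)
        = (1 - Vbar)ᵀ * E * (1 - Vbar) - (1 - Vbar)ᵀ * (E * A)
          - (Aᵀ * E) * (1 - Vbar) + (Aᵀ * E) * A := by
      simp only [Matrix.transpose_sub, Matrix.sub_mul, Matrix.mul_sub, Matrix.mul_assoc]
      abel
    rw [expand, hEA, hAtE]
    have h1 : (1 - Vbar)ᵀ * P = P := by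
      rw [Matrix.transpose_sub, Matrix.transpose_one, Matrix.sub_mul, Matrix.one_mul,
        hVtP, sub_zero]
    have h2 : P * (1 - Vbar) = P := by
      rw [Matrix.mul_sub, Matrix.mul_one, hPV, sub_zero]
    rw [h1, h2, hPA]
    abel
  rw [key]
  have hEps : E.PosSemidef := Matrix.PosSemidef.diagonal (fun i => (inv_nonneg.mpr (hx i).le))
  have := hEps.conjTranspose_mul_mul_same (1 - Vbar - A)
  simpa using this
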